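/- Let u be a norm-one smooth point of a real normed space X with unique supporting functional x*. Then for every x ∈ X, x*(x) = lim_{t→+∞} (‖t·u + x‖ − t). -/

import Mathlib

open Filter

theorem stmt_7 {X : Type*} [NormedAddCommGroup X] [NormedSpace ℝ X]
    (u : X) (hu : ‖u‖ = 1) (x' : X →L[ℝ] ℝ) (hx' : ‖x'‖ = 1) (hx'u : x' u = 1)
    (huniq : ∀ ψ : X →L[ℝ] ℝ, ‖ψ‖ = 1 → ψ u = 1 → ψ = x') :
    ∀ x : X, Tendsto (fun t : ℝ => ‖t • u + x‖ - t) atTop (nhds (x' x)) := by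
  set f : X → ℝ → ℝ := fun y t => ‖t • u + y‖ - t with hf_def
  set p : X → ℝ := fun y => ⨅ t : ℝ, f y t with hp_def
  -- basic lower bound
  have hlb : ∀ y : X, ∀ t : ℝ, x' y ≤ f y t := by
    intro y t
    have h1 : x' (t • u + y) ≤ ‖t • u + y‖ := by
      have := (Real.le_norm_self _).trans (x'.le_opNorm (t • u + y))
      rwa [hx', one_mul] at this
    have h2 : x' (t • u + y) = t + x' y := by
      simp [map_add, map_smul, hx'u, smul_eq_mul]
    simp only [hf_def]
    linarith
  have hbdd : ∀ y : X, BddBelow (Set.range (f y)) := fun y =>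
    ⟨x' y, by rintro - ⟨t, rfl⟩; exact hlb y t⟩
  -- antitone
  have hanti : ∀ y : X, Antitone (f y) := by
    intro y s t hst
    simp only [hf_def]
    have : t • u + y = (s • u + y) + (t - s) • u := by
      rw [sub_smul]; abel
    have hn : ‖t • u + y‖ ≤ ‖s • u + y‖ + (t - s) := by
      rw [this]
      calc ‖(s • u + y) + (t - s) • u‖ ≤ ‖s • u + y‖ + ‖(t - s) • u‖ := norm_add_le _ _
        _ = ‖s • u + y‖ + (t - s) := by
            rw [norm_smul, hu, mul_one, Real.norm_eq_abs, abs_of_nonneg (by linarith)]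
    linarith
  have htendsto : ∀ y : X, Tendsto (f y) atTop (nhds (p y)) := fun y =>
    tendsto_atTop_ciInf (hanti y) (hbdd y)
  have hp_le : ∀ y : X, ∀ t : ℝ, p y ≤ f y t := fun y t => ciInf_le (hbdd y) t
  have hp_ge : ∀ y : X, x' y ≤ p y := fun y => le_ciInf (hlb y)
  have hp_le_norm : ∀ y : X, p y ≤ ‖y‖ := by
    intro y
    have := hp_le y 0
    simpa [hf_def] using this
  -- scaling identity of f
  have hf_smul : ∀ (c : ℝ), 0 < c → ∀ (y : X) (t : ℝ), f (c • y) t = c * f y (t / c) := by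
    intro c hc y t
    have h1 : t • u + c • y = c • ((t / c) • u + y) := by
      rw [smul_add, smul_smul, mul_div_cancel₀ _ hc.ne']
    simp only [hf_def, h1, norm_smul, Real.norm_eq_abs, abs_of_pos hc]
    field_simp
  -- one-sided homogeneity gives equality
  have hhom_le : ∀ (c : ℝ), 0 < c → ∀ y : X, c * p y ≤ p (c • y) := by
    intro c hc y
    refine le_ciInf fun t => ?_
    rw [hf_smul c hc y t]
    exact mul_le_mul_of_nonneg_left (hp_le y (t / c)) hc.le
  have hhom : ∀ (c : ℝ), 0 < c → ∀ y : X, p (c • y) = c * p y := by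
    intro c hc y
    refine le_antisymm ?_ (hhom_le c hc y)
    have h := hhom_le c⁻¹ (inv_pos.2 hc) (c • y)
    rw [inv_smul_smul₀ hc.ne' y] at h
    calc p (c • y) = c * (c⁻¹ * p (c • y)) := by field_simp
      _ ≤ c * p y := mul_le_mul_of_nonneg_left h hc.le
  -- subadditivity
  have hadd : ∀ y z : X, p (y + z) ≤ p y + p z := by
    intro y z
    refine le_ciInf_add_ciInf fun s t => ?_
    have h1 : p (y + z) ≤ f (y + z) (s + t) := hp_le _ _
    have h2 : f (y + z) (s + t) ≤ f y s + f z t := by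
      simp only [hf_def]
      have : (s + t) • u + (y + z) = (s • u + y) + (t • u + z) := by
        rw [add_smul]; abel
      rw [this]
      have := norm_add_le (s • u + y) (t • u + z)
      linarith
    linarith
  -- p 0 = 0
  have hp0 : p 0 = 0 := by
    refine le_antisymm (by simpa using hp_le_norm 0) (le_ciInf fun t => ?_)
    simp only [hf_def, add_zero, norm_smul, hu, mul_one, Real.norm_eq_abs]
    exact sub_nonneg.2 (le_abs_self t)
  -- 0 ≤ p y + p (-y)
  have hpos : ∀ y : X, 0 ≤ p y + p (-y) := by
    intro y
    have := hadd y (-y)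
    rw [add_neg_cancel, hp0] at this
    exact this
  intro x
  -- linear functional on span of x
  have H : ∀ c : ℝ, c • x = 0 → c • (p x) = 0 := by
    intro c hc
    rcases smul_eq_zero.1 hc with rfl | rfl
    · simp
    · simp [hp0]
  set flin := LinearPMap.mkSpanSingleton' (σ := RingHom.id ℝ) x (p x) H with hflin
  have hfle : ∀ z : flin.domain, flin z ≤ p z := by
    rintro ⟨z, hz⟩
    have hz' : z ∈ Submodule.span ℝ {x} := by
      have h := hz
      rwa [hflin, LinearPMap.domain_mkSpanSingleton] at h
    obtain ⟨c, hc'⟩ := Submodule.mem_span_singleton.1 hz'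
    subst hc'
    have happ : flin ⟨c • x, hz⟩ = c • (p x) :=
      LinearPMap.mkSpanSingleton'_apply x (p x) H c hz
    rw [happ]
    show c • p x ≤ p (c • x)
    rcases lt_trichotomy c 0 with hc | rfl | hc
    · have h1 : (-c) * p (-x) ≤ p ((-c) • (-x)) := hhom_le (-c) (by linarith) (-x)
      rw [neg_smul, smul_neg, neg_neg] at h1
      have h2 := hpos x
      simp only [smul_eq_mul]
      nlinarith
    · simp [hp0]
    · rw [hhom c hc x]
      simp [smul_eq_mul]
  obtain ⟨g, hg_eq, hg_le⟩ :=
    exists_extension_of_le_sublinear flin p (fun c hc y => hhom c hc y) hadd hfle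
  have hgx : g x = p x := by
    have hm : x ∈ flin.domain := by
      rw [LinearPMap.domain_mkSpanSingleton]
      exact Submodule.mem_span_singleton_self x
    have := hg_eq ⟨x, hm⟩
    exact this.trans (LinearPMap.mkSpanSingleton'_apply_self x (p x) H hm)
  -- continuity
  have hbound : ∀ y : X, ‖g y‖ ≤ 1 * ‖y‖ := by
    intro y
    rw [one_mul, Real.norm_eq_abs, abs_le]
    constructor
    · have h1 : g (-y) ≤ p (-y) := hg_le (-y)
      have h2 : p (-y) ≤ ‖-y‖ := hp_le_norm (-y)
      rw [norm_neg] at h2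
      rw [map_neg] at h1
      linarith
    · exact (hg_le y).trans (hp_le_norm y)
  set ψ : X →L[ℝ] ℝ := g.mkContinuous 1 hbound with hψ
  have hψ_apply : ∀ y : X, ψ y = g y := fun y => rfl
  have hψu : ψ u = 1 := by
    have h1 : ψ u ≤ 1 := by
      rw [hψ_apply]
      have := (hg_le u).trans (hp_le_norm u)
      rwa [hu] at this
    have h2 : (1 : ℝ) ≤ ψ u := by
      have hpu : p (-u) ≤ -1 := by
        have := hp_le (-u) 1
        simpa [hf_def, hu] using this
      have h3 : g (-u) ≤ -1 := (hg_le (-u)).trans hpu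
      rw [map_neg] at h3
      rw [hψ_apply]
      linarith
    linarith
  have hψnorm : ‖ψ‖ = 1 := by
    refine le_antisymm (g.mkContinuous_norm_le zero_le_one hbound) ?_
    have := ψ.le_opNorm u
    rw [hψu, hu, mul_one] at this
    simpa using this
  have hψx' : ψ = x' := huniq ψ hψnorm hψu
  have hx'x : x' x = p x := by rw [← hψx', hψ_apply, hgx]
  rw [hx'x]
  exact htendsto x
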